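/- For a prime p and m ∈ ℕ with m ≤ p, the number of polyfunctions over ℤ/p^mℤ equals p^{p·C(m+1,2)} = p^{p·m(m+1)/2}. -/
import Mathlib

open Polynomial Finset

set_option linter.unusedSectionVars false
set_option linter.unusedVariables false
set_option linter.unusedTactic false

/-- The number of polyfunctions over `ℤ/nℤ`. -/
noncomputable def Psi (n : ℕ) : ℕ :=
  Nat.card {f : ZMod n → ZMod n // ∃ p : Polynomial (ZMod n), ∀ x, p.eval x = f x}


section Span
variable {R : Type*} [CommRing R] [Nontrivial R]

theorem descPochhammer_monic' (k : ℕ) : (descPochhammer R k).Monic := by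
  have := (monic_descPochhammer ℤ k).map (Int.castRingHom R)
  rwa [descPochhammer_map] at this

theorem descPochhammer_natDegree' (k : ℕ) : (descPochhammer R k).natDegree = k := by
  rw [← descPochhammer_map (Int.castRingHom R), (monic_descPochhammer ℤ k).natDegree_map,
    descPochhammer_natDegree]

theorem descPochhammer_span (d : ℕ) :
    ∀ P : R[X], P.natDegree ≤ d →
      P ∈ Submodule.span R (Set.range (descPochhammer R)) := by
  induction d with
  | zero =>
    intro P hP
    rw [Polynomial.eq_C_of_natDegree_le_zero hP]
    have : C (P.coeff 0) = (P.coeff 0) • descPochhammer R 0 := by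
      simp [descPochhammer_zero, Polynomial.smul_eq_C_mul]
    rw [this]
    exact Submodule.smul_mem _ _ (Submodule.subset_span ⟨0, rfl⟩)
  | succ d ih =>
    intro P hP
    by_cases hPd : P.natDegree ≤ d
    · exact ih P hPd
    have hdeg : P.natDegree = d + 1 := le_antisymm hP (not_le.mp hPd)
    have hP0 : P ≠ 0 := fun h => by simp [h] at hdeg
    have hmon : (descPochhammer R (d + 1)).Monic := descPochhammer_monic' _
    have hlc : P.leadingCoeff ≠ 0 := Polynomial.leadingCoeff_ne_zero.mpr hP0
    have hdegF : (C P.leadingCoeff * descPochhammer R (d + 1)).degree = P.degree := by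
      rw [hmon.degree_mul, Polynomial.degree_C hlc, zero_add,
        Polynomial.degree_eq_natDegree hmon.ne_zero, descPochhammer_natDegree',
        Polynomial.degree_eq_natDegree hP0, hdeg]
    set Q : R[X] := P - C P.leadingCoeff * descPochhammer R (d + 1) with hQ
    have hQmem : Q ∈ Submodule.span R (Set.range (descPochhammer R)) := by
      by_cases hQ0 : Q = 0
      · rw [hQ0]; exact Submodule.zero_mem _
      · apply ih
        have hlt : Q.degree < P.degree := by
          apply Polynomial.degree_sub_lt hdegF.symm hP0
          rw [Polynomial.leadingCoeff_mul_monic hmon, Polynomial.leadingCoeff_C]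
        have := Polynomial.natDegree_lt_natDegree hQ0 hlt
        omega
    have : P = Q + P.leadingCoeff • descPochhammer R (d + 1) := by
      rw [hQ, Polynomial.smul_eq_C_mul]; ring
    rw [this]
    exact Submodule.add_mem _ hQmem
      (Submodule.smul_mem _ _ (Submodule.subset_span ⟨d + 1, rfl⟩))
end Span


-- evaluation of descPochhammer over ZMod n at any point is a cast of descFactorial
theorem eval_descPoch {n : ℕ} [NeZero n] (k : ℕ) (x : ZMod n) :
    (descPochhammer (ZMod n) k).eval x = ((x.val.descFactorial k : ℕ) : ZMod n) := by
  conv_lhs => rw [← ZMod.natCast_zmod_val x]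
  rw [descPochhammer_eval_eq_descFactorial]

-- null lemma
theorem null_lemma {n : ℕ} [NeZero n] (k c : ℕ) (h : n ∣ c * Nat.factorial k) (x : ZMod n) :
    (c : ZMod n) * (descPochhammer (ZMod n) k).eval x = 0 := by
  rw [eval_descPoch, ← Nat.cast_mul, ZMod.natCast_eq_zero_iff]
  exact dvd_trans h (mul_dvd_mul_left c (Nat.factorial_dvd_descFactorial _ _))

-- Legendre: for k < p^2, padicValNat p (k !) = k / p
theorem padic_fact {p : ℕ} [hp : Fact p.Prime] {k : ℕ} (h : k < p ^ 2) :
    padicValNat p (Nat.factorial k) = k / p := by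
  rcases Nat.eq_zero_or_pos k with rfl | hk0
  · simp
  have hlog : Nat.log p k < 2 := Nat.log_lt_of_lt_pow hk0.ne' h
  rw [padicValNat_factorial hlog]
  have : Finset.Ico 1 2 = {1} := rfl
  rw [this, Finset.sum_singleton, pow_one]

-- p^(k/p) divides k!
theorem pow_div_dvd_fact {p : ℕ} [hp : Fact p.Prime] (k : ℕ) : p ^ (k / p) ∣ Nat.factorial k := by
  calc p ^ (k / p) ∣ p ^ (padicValNat p (Nat.factorial k)) := by
        apply pow_dvd_pow
        rw [padicValNat_factorial (b := Nat.log p k + 1) (Nat.lt_succ_self _)]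
        calc k / p = k / p ^ 1 := by rw [pow_one]
        _ ≤ _ := by
            by_cases h1 : 1 ∈ Finset.Ico 1 (Nat.log p k + 1)
            · exact Finset.single_le_sum (f := fun i => k / p ^ i) (fun _ _ => Nat.zero_le _) h1
            · simp only [Finset.mem_Ico] at h1
              push_neg at h1
              have : Nat.log p k = 0 := by omega
              have hk : k < p := by
                by_contra hk
                push_neg at hk
                have := Nat.log_pos hp.out.one_lt hk
                omega
              simp [Nat.div_eq_of_lt hk]
    _ ∣ _ := pow_padicValNat_dvd

theorem unique_coeffs (p m : ℕ) [hp : Fact p.Prime] (hm : 0 < m) (hmp : m ≤ p)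
    (b b' : ℕ → ℕ) (hb : ∀ k < m * p, b k < p ^ (m - k / p))
    (hb' : ∀ k < m * p, b' k < p ^ (m - k / p))
    (h : ∀ x : ZMod (p ^ m),
      ∑ k ∈ range (m * p), (b k : ZMod (p ^ m)) * (descPochhammer (ZMod (p ^ m)) k).eval x
        = ∑ k ∈ range (m * p), (b' k : ZMod (p ^ m)) * (descPochhammer (ZMod (p ^ m)) k).eval x) :
    ∀ j < m * p, b j = b' j := by
  intro j
  induction j using Nat.strong_induction_on with
  | _ j IH =>
    intro hj
    have hx := h ((j : ℕ) : ZMod (p ^ m))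
    simp only [descPochhammer_eval_eq_descFactorial, ← Nat.cast_mul, ← Nat.cast_sum] at hx
    have hdvd : ((p ^ m : ℕ) : ℤ) ∣
        (∑ k ∈ range (m * p), (b' k * j.descFactorial k) : ℕ)
          - (∑ k ∈ range (m * p), (b k * j.descFactorial k) : ℕ) :=
      ((ZMod.natCast_eq_natCast_iff _ _ _).mp hx).dvd
    have hrw : ((∑ k ∈ range (m * p), (b' k * j.descFactorial k) : ℕ) : ℤ)
        - ((∑ k ∈ range (m * p), (b k * j.descFactorial k) : ℕ) : ℤ)
        = ((b' j : ℤ) - b j) * (Nat.factorial j : ℤ) := by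
      push_cast
      rw [← Finset.sum_sub_distrib]
      rw [Finset.sum_eq_single j]
      · rw [Nat.descFactorial_self]; ring
      · intro k hk hkj
        rcases lt_or_gt_of_ne hkj with hlt | hgt
        · rw [IH k hlt (lt_trans hlt hj)]; ring
        · rw [Nat.descFactorial_eq_zero_iff_lt.mpr hgt]; push_cast; ring
      · intro hj'; exact absurd (mem_range.mpr hj) hj'
    rw [hrw] at hdvd
    -- valuation
    set v := padicValNat p (Nat.factorial j) with hvdef
    have hj2 : j < p ^ 2 := lt_of_lt_of_le hj (by
      calc m * p ≤ p * p := Nat.mul_le_mul_right p hmp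
        _ = p ^ 2 := (sq p).symm)
    have hv : v = j / p := padic_fact hj2
    have hvm : v < m := by rw [hv]; exact (Nat.div_lt_iff_lt_mul hp.out.pos).mpr hj
    have hfac : p ^ v * (Nat.factorial j / p ^ v) = Nat.factorial j := by
      have h0 := Nat.ordProj_mul_ordCompl_eq_self (Nat.factorial j) p
      rwa [Nat.factorization_def _ hp.out] at h0
    have hcop : Nat.Coprime (p ^ (m - v)) (Nat.factorial j / p ^ v) := by
      have h1 := Nat.coprime_ordCompl hp.out (Nat.factorial_ne_zero j)
      rw [Nat.factorization_def _ hp.out] at h1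
      exact Nat.Coprime.pow_left _ h1
    set u := Nat.factorial j / p ^ v with hu
    have hdvd2 : ((p : ℤ)) ^ (m - v) ∣ ((b' j : ℤ) - b j) := by
      have h0 : ((p : ℤ)) ^ (m - v) * (p : ℤ) ^ v ∣ (((b' j : ℤ) - b j) * u) * (p : ℤ) ^ v := by
        rw [← pow_add, Nat.sub_add_cancel hvm.le]
        have : (((b' j : ℤ) - b j) * u) * (p : ℤ) ^ v = ((b' j : ℤ) - b j) * (Nat.factorial j : ℤ) := by
          rw [← hfac]; push_cast; ring
        rw [this]
        exact_mod_cast hdvd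
      have h1 := (mul_dvd_mul_iff_right (pow_ne_zero v
        (by exact_mod_cast hp.out.pos.ne' : (p : ℤ) ≠ 0))).mp h0
      have h2 : IsCoprime ((p : ℤ) ^ (m - v)) (u : ℤ) := by
        have := Nat.isCoprime_iff_coprime.mpr hcop
        push_cast at this
        exact this
      exact h2.dvd_of_dvd_mul_right h1
    have habs : |((b' j : ℤ) - b j)| < (p : ℤ) ^ (m - v) := by
      have h1 := hb j hj
      have h2 := hb' j hj
      rw [← hv] at h1 h2
      rw [abs_sub_lt_iff]
      constructor <;> [skip; skip] <;>
        · push_cast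
          have : ((p : ℤ)) ^ (m - v) = ((p ^ (m - v) : ℕ) : ℤ) := by push_cast; ring
          rw [this]
          omega
    have := Int.eq_zero_of_abs_lt_dvd hdvd2 habs
    omega


theorem sum_div_aux (p q : ℕ) (hp : 0 < p) :
    ∑ k ∈ range (q * p), k / p = p * ∑ j ∈ range q, j := by
  induction q with
  | zero => simp
  | succ q ih =>
    rw [Nat.succ_mul, Finset.sum_range_add, ih]
    have : ∀ i ∈ range p, (q * p + i) / p = q := by
      intro i hi
      rw [add_comm, Nat.add_mul_div_right _ _ hp, Nat.div_eq_of_lt (mem_range.mp hi), zero_add]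
    rw [Finset.sum_congr rfl this, Finset.sum_const, card_range, smul_eq_mul,
      Finset.sum_range_succ]
    ring

theorem sum_arith (p m : ℕ) (hp : 0 < p) (hm : 0 < m) :
    ∑ k ∈ range (m * p), (m - k / p) = p * Nat.choose (m + 1) 2 := by
  have hle : ∀ k ∈ range (m * p), k / p ≤ m := fun k hk =>
    le_of_lt ((Nat.div_lt_iff_lt_mul hp).mpr (mem_range.mp hk))
  rw [Finset.sum_tsub_distrib _ hle, Finset.sum_const, card_range, smul_eq_mul,
    sum_div_aux p m hp]
  set A := ∑ j ∈ range m, j with hA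
  set C := Nat.choose (m + 1) 2 with hCdef
  have h2A : A * 2 = m * (m - 1) := Finset.sum_range_id_mul_two m
  have hC : C * 2 = (m + 1) * m := by
    rw [hCdef, Nat.choose_two_right, Nat.add_sub_cancel]
    exact Nat.div_mul_cancel (by simpa [mul_comm] using (Nat.even_mul_succ_self m).two_dvd)
  have e1 : m * (m - 1) + m = m * m := by
    cases m with
    | zero => omega
    | succ mm => simp [Nat.succ_sub_one]; ring
  have key : m * p * m = p * C + p * A := by
    apply Nat.eq_of_mul_eq_mul_left (show 0 < 2 by norm_num)
    calc 2 * (m * p * m) = p * (m * m + m * m) := by ring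
      _ = p * (m * m + (m * (m - 1) + m)) := by rw [e1]
      _ = p * ((m + 1) * m) + p * (m * (m - 1)) := by ring
      _ = p * (C * 2) + p * (A * 2) := by rw [hC, h2A]
      _ = 2 * (p * C + p * A) := by ring
  exact Nat.sub_eq_of_eq_add key

/-- For `p` prime and `m ≤ p`, `Ψ(p^m) = p^{p⬝C(m+1,2)}`. -/
theorem Psi_prime_pow_small (p : ℕ) (hp : p.Prime) (m : ℕ) (hm : 0 < m)
    (hmp : m ≤ p) : Psi (p ^ m) = p ^ (p * Nat.choose (m + 1) 2) := by
  haveI : Fact p.Prime := ⟨hp⟩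
  haveI : NeZero (p ^ m) := ⟨pow_ne_zero _ hp.pos.ne'⟩
  haveI : Nontrivial (ZMod (p ^ m)) := by
    have h1 : 1 < p ^ m := Nat.one_lt_pow hm.ne' hp.one_lt
    exact ZMod.nontrivial_iff.mpr (by omega)
  set n := p ^ m with hn
  set N := m * p with hN
  set d : ℕ → ℕ := fun k => p ^ (m - k / p) with hd
  have hd0 : ∀ k, 0 < d k := fun k => pow_pos hp.pos _
  have hdk : ∀ k, k < N → n ∣ d k * Nat.factorial k := by
    intro k hk
    have h1 : p ^ (k / p) ∣ Nat.factorial k := pow_div_dvd_fact k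
    have h2 : k / p < m := (Nat.div_lt_iff_lt_mul hp.pos).mpr hk
    have h3 : n = d k * p ^ (k / p) := by
      rw [hn, hd, ← pow_add]
      congr 1
      omega
    rw [h3]
    exact mul_dvd_mul_left _ h1
  have hNk : ∀ k, N ≤ k → n ∣ Nat.factorial k := by
    intro k hk
    have h1 : p ^ (N / p) ∣ Nat.factorial N := pow_div_dvd_fact N
    have h2 : N / p = m := by
      rw [hN]
      exact Nat.mul_div_left m hp.pos
    rw [h2] at h1
    exact dvd_trans h1 (Nat.factorial_dvd_factorial hk)
  set Φ : (∀ k : Fin N, Fin (d k)) → (ZMod n → ZMod n) := fun c x =>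
    ∑ k : Fin N, ((c k : ℕ) : ZMod n) * (descPochhammer (ZMod n) (k : ℕ)).eval x with hΦ
  have hΦpoly : ∀ c, ∃ P : Polynomial (ZMod n), ∀ x, P.eval x = Φ c x := by
    intro c
    refine ⟨∑ k : Fin N, C ((c k : ℕ) : ZMod n) * descPochhammer (ZMod n) (k : ℕ), fun x => ?_⟩
    rw [Polynomial.eval_finset_sum]
    simp [hΦ]
  set E : (∀ k : Fin N, Fin (d k)) → {f : ZMod n → ZMod n // ∃ P : Polynomial (ZMod n), ∀ x, P.eval x = f x} :=
    fun c => ⟨Φ c, hΦpoly c⟩ with hE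
  have hsum : ∀ (cc : ∀ k : Fin N, Fin (d k)) (x : ZMod n),
      Φ cc x = ∑ k ∈ range N,
        (((if h : k < N then (cc ⟨k, h⟩ : ℕ) else 0) : ℕ) : ZMod n)
          * (descPochhammer (ZMod n) k).eval x := by
    intro cc x
    rw [hΦ]
    rw [← Fin.sum_univ_eq_sum_range
      (fun k => (((if h : k < N then (cc ⟨k, h⟩ : ℕ) else 0) : ℕ) : ZMod n)
        * (descPochhammer (ZMod n) k).eval x) N]
    apply Finset.sum_congr rfl
    intro k _
    rw [dif_pos k.isLt]
  have hinj : Function.Injective E := by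
    intro c c' hcc
    have hΦeq : Φ c = Φ c' := congrArg Subtype.val hcc
    have key := unique_coeffs p m hm hmp
      (fun k => if h : k < N then (c ⟨k, h⟩ : ℕ) else 0)
      (fun k => if h : k < N then (c' ⟨k, h⟩ : ℕ) else 0)
      (fun k hk => by dsimp only; rw [dif_pos hk]; exact (c ⟨k, hk⟩).isLt)
      (fun k hk => by dsimp only; rw [dif_pos hk]; exact (c' ⟨k, hk⟩).isLt)
      (fun x => by rw [← hsum c x, ← hsum c' x, hΦeq])
    funext k
    have hk := key k.val k.isLt
    dsimp only at hk
    rw [dif_pos k.isLt, dif_pos k.isLt] at hk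
    exact Fin.ext (by simpa using hk)
  have hsurj : Function.Surjective E := by
    rintro ⟨f, P, hP⟩
    have hmem := descPochhammer_span (R := ZMod n) P.natDegree P le_rfl
    rw [Finsupp.mem_span_range_iff_exists_finsupp] at hmem
    obtain ⟨a, ha⟩ := hmem
    have hf1 : ∀ x, f x = ∑ k ∈ range N, (a k) * (descPochhammer (ZMod n) k).eval x := by
      intro x
      rw [← hP x, ← ha, Finsupp.sum, Polynomial.eval_finset_sum]
      simp only [Polynomial.eval_smul, smul_eq_mul]
      have h1 : ∑ k ∈ a.support, a k * (descPochhammer (ZMod n) k).eval x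
          = ∑ k ∈ a.support ∪ range N, a k * (descPochhammer (ZMod n) k).eval x := by
        apply Finset.sum_subset subset_union_left
        intro k _ hks
        rw [Finsupp.notMem_support_iff.mp hks, zero_mul]
      have h2 : ∑ k ∈ range N, a k * (descPochhammer (ZMod n) k).eval x
          = ∑ k ∈ a.support ∪ range N, a k * (descPochhammer (ZMod n) k).eval x := by
        apply Finset.sum_subset subset_union_right
        intro k _ hks
        have hkN : N ≤ k := le_of_not_gt (fun hlt => hks (mem_range.mpr hlt))
        have hz : (descPochhammer (ZMod n) k).eval x = 0 := by
          have := null_lemma k 1 (by simpa using hNk k hkN) x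
          simpa using this
        rw [hz, mul_zero]
      rw [h1, h2]
    refine ⟨fun k => ⟨(a (k : ℕ)).val % d (k : ℕ), Nat.mod_lt _ (hd0 _)⟩, ?_⟩
    apply Subtype.ext
    show Φ _ = f
    funext x
    rw [hf1 x, hΦ]
    rw [← Fin.sum_univ_eq_sum_range (fun k => a k * (descPochhammer (ZMod n) k).eval x) N]
    apply Finset.sum_congr rfl
    intro k _
    simp only
    set t := (a (k : ℕ)).val with ht
    have hz : ((d (k : ℕ) : ℕ) : ZMod n) * (descPochhammer (ZMod n) (k : ℕ)).eval x = 0 :=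
      null_lemma _ _ (hdk _ k.isLt) x
    have hsplit : (a (k : ℕ)) = ((d (k : ℕ) * (t / d (k : ℕ)) + t % d (k : ℕ) : ℕ) : ZMod n) := by
      rw [Nat.div_add_mod t (d (k : ℕ)), ht, ZMod.natCast_zmod_val]
    rw [hsplit]
    push_cast
    linear_combination (-((t / d (k : ℕ) : ℕ) : ZMod n)) * hz
  have hcard := Nat.card_eq_of_bijective E ⟨hinj, hsurj⟩
  unfold Psi
  rw [← hcard, Nat.card_pi]
  simp only [Nat.card_eq_fintype_card, Fintype.card_fin]
  rw [show (∏ k : Fin N, d (k : ℕ)) = ∏ k ∈ range N, d k from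
    Fin.prod_univ_eq_prod_range _ _]
  simp only [hd]
  rw [Finset.prod_pow_eq_pow_sum]
  congr 1
  rw [hN]
  exact sum_arith p m hp.pos hm
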